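/- Let n be a positive integer and R the n×n real matrix with R_{ij} = C(i-1, n-j). Then the determinant of R equals (-1)^{⌊n/2⌋} (equivalently, up to sign, the product of the eigenvalues (-1)^{n+j} a^{2j-n-1}, j = 1,…,n, equals ±1, since Σ_{j=1}^n (2j-n-1) = 0). -/

import Mathlib

open Equiv Equiv.Perm

lemma revPerm_mul_finRotate (n : ℕ) :
    (Fin.revPerm : Perm (Fin (n + 1))) * finRotate (n + 1) =
      finSumFinEquiv.permCongr (Equiv.sumCongr (Fin.revPerm : Perm (Fin n)) (1 : Perm (Fin 1))) := by
  ext i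
  rcases Fin.eq_castSucc_or_eq_last i with ⟨j, rfl⟩ | rfl
  · have h1 : finSumFinEquiv.symm (Fin.castSucc j) = Sum.inl j := by
      apply finSumFinEquiv.injective
      simp [Fin.ext_iff]
    have h2 : (finRotate (n + 1)) (Fin.castSucc j) = j.succ := by
      rw [finRotate_succ_apply]
      ext
      simp [Fin.add_def]
    simp only [Perm.mul_apply, h2, permCongr_apply, h1, Equiv.sumCongr_apply, Sum.map_inl]
    simp only [Fin.ext_iff, Fin.rev, Fin.succ]
    simp
  · have h1 : finSumFinEquiv.symm (Fin.last n) = Sum.inr 0 := by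
      apply finSumFinEquiv.injective
      simp [Fin.ext_iff]
    simp only [Perm.mul_apply, finRotate_last, permCongr_apply, h1, Equiv.sumCongr_apply, Sum.map_inr,
      Perm.coe_one, id]
    simp [Fin.rev, finSumFinEquiv_apply_right]

lemma sign_revPerm (n : ℕ) :
    Perm.sign (Fin.revPerm : Perm (Fin n)) = (-1 : ℤˣ) ^ (n / 2) := by
  induction n with
  | zero =>
    have h0 : (Fin.revPerm : Perm (Fin 0)) = 1 := Subsingleton.elim _ _
    simp [h0]
  | succ n ih =>
    have h := congrArg Perm.sign (revPerm_mul_finRotate n)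
    rw [Perm.sign_mul, sign_finRotate, sign_permCongr, Perm.sign_sumCongr, ih, Perm.sign_one,
      mul_one] at h
    have : Perm.sign (Fin.revPerm : Perm (Fin (n + 1))) = (-1 : ℤˣ) ^ (n / 2) * (-1) ^ n := by
      calc Perm.sign (Fin.revPerm : Perm (Fin (n + 1)))
          = Perm.sign (Fin.revPerm : Perm (Fin (n + 1))) * ((-1 : ℤˣ) ^ n * (-1) ^ n) := by
            rw [← pow_add]; simp [pow_mul]
        _ = (-1 : ℤˣ) ^ (n / 2) * (-1) ^ n := by
            rw [← mul_assoc]; simp only [Nat.add_sub_cancel] at h; rw [h]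
    rw [this, ← pow_add, Int.units_pow_eq_pow_mod_two, Int.units_pow_eq_pow_mod_two (-1) ((n+1)/2)]
    congr 1
    have h2 : (n/2 + n) % 2 = (n+1)/2 % 2 := by
      rcases Nat.even_or_odd n with ⟨k,rfl⟩|⟨k,rfl⟩ <;> omega
    exact h2

theorem stmt_7 (n : ℕ) (hn : 0 < n)
    (R : Matrix (Fin n) (Fin n) ℝ)
    (hR : ∀ i j : Fin n, R i j = (((i : ℕ) + 1 - 1).choose (n - ((j : ℕ) + 1)) : ℝ)) :
    R.det = (-1 : ℝ) ^ (n / 2) := by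
  set M : Matrix (Fin n) (Fin n) ℝ := fun i j => ((i : ℕ).choose (j : ℕ) : ℝ) with hM
  have hRM : R = M.submatrix id (Fin.revPerm : Perm (Fin n)) := by
    ext i j
    rw [hR, Matrix.submatrix_apply]
    simp only [Matrix.submatrix_apply, hM, id, Fin.revPerm_apply, Fin.val_rev]
    norm_num
  have hMdet : M.det = 1 := by
    have htri : M.BlockTriangular OrderDual.toDual := by
      intro i j hij
      simp only [hM]
      rw [Nat.choose_eq_zero_of_lt (by exact_mod_cast hij)]
      simp
    rw [Matrix.det_of_lowerTriangular M htri]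
    simp [hM]
  rw [hRM, Matrix.det_permute', hMdet, mul_one, sign_revPerm]
  push_cast
  rfl
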